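/- arXiv:2309.01757 — 5 statements merged into one kernel-verified Lean document; each statement's English description precedes it below -/
import Mathlib

section
/- Let E be a local topos with global sections π_* and right adjoint π^! (the codiscrete functor). Call an object X of E concrete if the unit map X → π^! π_* X is a monomorphism. Then the full subcategory of concrete objects is reflective in E: the inclusion admits a left adjoint, given by taking the epi-mono (image) factorization X ↠ X' ↪ π^! π_* X of the unit. -/
open CategoryTheory CategoryTheory.Limits

universe v u

/-- Let `E` be a local topos, with global sections `Γ = Hom(1, -)`, codiscrete functor
`π^!` right adjoint to `Γ`, and constant object functor left adjoint to `Γ`.  Call an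
object `X` concrete if the unit `X ⟶ π^! Γ X` is a monomorphism.  Then the full
subcategory of concrete objects is reflective: the inclusion admits a left adjoint
(given by the epi-mono factorization of the unit). -/
theorem concrete_objects_reflective
    {E : Type u} [Category.{v} E] [HasTerminal E] [HasFiniteLimits E] [HasColimits E]
    [HasImages E]
    (const : Type v ⥤ E) (shriek : Type v ⥤ E)
    (adjConst : const ⊣ coyoneda.obj (Opposite.op (⊤_ E)))
    [PreservesFiniteLimits const]
    (adj : coyoneda.obj (Opposite.op (⊤_ E)) ⊣ shriek) :
    (ObjectProperty.ι (fun X : E => Mono (adj.unit.app X) : ObjectProperty E)).IsRightAdjoint := by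
  -- the image of the unit is concrete
  have himg : ∀ X : E, Mono (adj.unit.app (image (adj.unit.app X))) := by
    intro X
    have tri := adj.right_triangle_components ((coyoneda.obj (Opposite.op (⊤_ E))).obj X)
    have hsm : SplitMono (adj.unit.app (shriek.obj
        ((coyoneda.obj (Opposite.op (⊤_ E))).obj X))) :=
      ⟨shriek.map (adj.counit.app _), tri⟩
    have hmono : Mono (image.ι (adj.unit.app X) ≫ adj.unit.app (shriek.obj
        ((coyoneda.obj (Opposite.op (⊤_ E))).obj X))) := by
      have := hsm.mono
      infer_instance
    have hnat := adj.unit.naturality (image.ι (adj.unit.app X))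
    simp only [Functor.id_map, Functor.comp_obj] at hnat
    rw [hnat] at hmono
    exact mono_of_mono _ ((coyoneda.obj (Opposite.op (⊤_ E)) ⋙ shriek).map
      (image.ι (adj.unit.app X)))
  set F_obj : E → ObjectProperty.FullSubcategory (fun X : E => Mono (adj.unit.app X) : ObjectProperty E) :=
    fun X => ⟨image (adj.unit.app X), himg X⟩ with hF
  have key : ∀ (X : E) (Y : ObjectProperty.FullSubcategory (fun X : E => Mono (adj.unit.app X) : ObjectProperty E))
      (f : X ⟶ Y.obj),
      ∃! g : image (adj.unit.app X) ⟶ Y.obj, factorThruImage (adj.unit.app X) ≫ g = f := by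
    intro X Y f
    have hYmono : Mono (adj.unit.app Y.obj) := Y.property
    have hnat := adj.unit.naturality f
    simp only [Functor.id_map] at hnat
    have sq : CommSq f (factorThruImage (adj.unit.app X)) (adj.unit.app Y.obj)
        (image.ι (adj.unit.app X) ≫ (coyoneda.obj (Opposite.op (⊤_ E)) ⋙ shriek).map f) := by
      constructor
      rw [← Category.assoc, image.fac]
      exact hnat
    exact ⟨sq.lift, sq.fac_left, fun g hg => by
      rw [← cancel_epi (factorThruImage (adj.unit.app X)), hg, sq.fac_left]⟩
  let e : ∀ (X : E) (Y : ObjectProperty.FullSubcategory (fun X : E => Mono (adj.unit.app X) : ObjectProperty E)),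
      (F_obj X ⟶ Y) ≃
        (X ⟶ (ObjectProperty.ι (fun X : E => Mono (adj.unit.app X) : ObjectProperty E)).obj Y) :=
    fun X Y =>
    { toFun := fun g => factorThruImage (adj.unit.app X) ≫ g.hom
      invFun := fun f => ObjectProperty.homMk (key X Y f).choose
      left_inv := fun g => InducedCategory.hom_ext ((key X Y (factorThruImage (adj.unit.app X) ≫ g.hom)).unique
        (key X Y _).choose_spec.1 rfl)
      right_inv := fun f => (key X Y f).choose_spec.1 }
  have he : ∀ X Y Y' (g : Y ⟶ Y') (h : F_obj X ⟶ Y),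
      e X Y' (h ≫ g) = e X Y h ≫
        (ObjectProperty.ι (fun X : E => Mono (adj.unit.app X) : ObjectProperty E)).map g := by
    intro X Y Y' g h
    show factorThruImage (adj.unit.app X) ≫ (h.hom ≫ g.hom) =
      (factorThruImage (adj.unit.app X) ≫ h.hom) ≫ g.hom
    rw [Category.assoc]
  exact ⟨Adjunction.leftAdjointOfEquiv e he, ⟨Adjunction.adjunctionOfEquivLeft e he⟩⟩
end

section
/- Let E be a local topos. The full subcategory of concrete objects of E is closed under filtered colimits along diagrams in which all transition morphisms are monomorphisms; in particular such colimits computed in E are again concrete. -/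
open CategoryTheory CategoryTheory.Limits

universe w v u

/-- In `Type`, the colimit inclusions of a filtered diagram with injective
transition maps are injective. -/
lemma filtered_colimit_ι_injective {I : Type v} [SmallCategory I] [IsFiltered I]
    (F : I ⥤ Type v) (h : ∀ {i j : I} (φ : i ⟶ j), Function.Injective (F.map φ)) (i : I) :
    Function.Injective (colimit.ι F i) := by
  intro x y hxy
  rw [Types.FilteredColimit.colimit_eq_iff] at hxy
  obtain ⟨k, f, g, hk⟩ := hxy
  have hcoeq : f ≫ IsFiltered.coeqHom f g = g ≫ IsFiltered.coeqHom f g :=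
    IsFiltered.coeq_condition f g
  have key : F.map (f ≫ IsFiltered.coeqHom f g) x = F.map (f ≫ IsFiltered.coeqHom f g) y := by
    rw [FunctorToTypes.map_comp_apply, hk, ← FunctorToTypes.map_comp_apply, ← hcoeq]
  exact h _ key

/-- Let `E` be a local topos (here: `Γ = Hom(1,-)` has a finite-limit-preserving left
adjoint and a right adjoint `π^!`; filtered colimits commute with finite limits, as in any
topos).  Then the concrete objects of `E` are closed under filtered colimits along
diagrams all of whose transition morphisms are monomorphisms: such a colimit, computed in
`E`, is again concrete. -/
theorem concrete_closed_under_filtered_colimits_of_mono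
    {E : Type u} [Category.{v} E] [HasTerminal E] [HasFiniteLimits E] [HasColimits E]
    (const : Type v ⥤ E) (shriek : Type v ⥤ E)
    (adjConst : const ⊣ coyoneda.obj (Opposite.op (⊤_ E)))
    [PreservesFiniteLimits const]
    (adj : coyoneda.obj (Opposite.op (⊤_ E)) ⊣ shriek)
    {I : Type v} [SmallCategory I] [IsFiltered I]
    [PreservesFiniteLimits (colim : (I ⥤ E) ⥤ E)]
    (X : I ⥤ E) (htrans : ∀ {i j : I} (φ : i ⟶ j), Mono (X.map φ))
    (hconc : ∀ i : I, Mono (adj.unit.app (X.obj i))) :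
    Mono (adj.unit.app (colimit X)) := by
  haveI : PreservesColimitsOfSize.{v, v} (coyoneda.obj (Opposite.op (⊤_ E))) :=
    adj.leftAdjoint_preservesColimits
  haveI : PreservesLimitsOfSize.{0, 0} shriek := adj.rightAdjoint_preservesLimits
  -- the transition maps of `X ⋙ Γ` are injective
  have htransG : ∀ {i j : I} (φ : i ⟶ j),
      Function.Injective ((X ⋙ coyoneda.obj (Opposite.op (⊤_ E))).map φ) := by
    intro i j φ a b hab
    haveI := htrans φ
    have : a ≫ X.map φ = b ≫ X.map φ := hab
    exact (cancel_mono (X.map φ)).1 this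
  -- hence the colimit inclusions of `X ⋙ Γ` are injective, so `Γ.map (colimit.ι X i)` is mono
  have hGι : ∀ i : I, Mono ((coyoneda.obj (Opposite.op (⊤_ E))).map (colimit.ι X i)) := by
    intro i
    have key : (coyoneda.obj (Opposite.op (⊤_ E))).map (colimit.ι X i)
        = colimit.ι (X ⋙ coyoneda.obj (Opposite.op (⊤_ E))) i ≫
            (preservesColimitIso (coyoneda.obj (Opposite.op (⊤_ E))) X).inv := by
      rw [Iso.eq_comp_inv, ι_preservesColimitIso_hom]
    rw [key]
    haveI : Mono (colimit.ι (X ⋙ coyoneda.obj (Opposite.op (⊤_ E))) i) :=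
      (mono_iff_injective _).2
        (filtered_colimit_ι_injective (X ⋙ coyoneda.obj (Opposite.op (⊤_ E))) htransG i)
    exact mono_comp _ _
  -- the cocone components `ι i ≫ η` are all monomorphisms
  have happ : ∀ i : I, Mono (colimit.ι X i ≫ adj.unit.app (colimit X)) := by
    intro i
    have nat : colimit.ι X i ≫ adj.unit.app (colimit X)
        = adj.unit.app (X.obj i) ≫
            shriek.map ((coyoneda.obj (Opposite.op (⊤_ E))).map (colimit.ι X i)) :=
      adj.unit.naturality (colimit.ι X i)
    rw [nat]
    haveI := hconc i
    haveI := hGι i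
    haveI : Mono (shriek.map ((coyoneda.obj (Opposite.op (⊤_ E))).map (colimit.ι X i))) :=
      shriek.map_mono _
    exact mono_comp _ _
  -- assemble them into a monic natural transformation `α : X ⟶ const Y`
  let Y : E := shriek.obj ((coyoneda.obj (Opposite.op (⊤_ E))).obj (colimit X))
  let α : X ⟶ (Functor.const I).obj Y :=
    { app := fun i => colimit.ι X i ≫ adj.unit.app (colimit X)
      naturality := by
        intro i j φ
        simp [colimit.w_assoc] }
  haveI : ∀ i : I, Mono (α.app i) := fun i => happ i
  haveI : Mono α := NatTrans.mono_of_mono_app α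
  haveI : Mono (colimMap α) := colim.map_mono α
  -- the comparison `colimit (const Y) ⟶ Y` is an isomorphism since `I` is connected
  let t : colimit ((Functor.const I).obj Y) ⟶ Y :=
    colimit.desc _ ⟨Y, { app := fun _ => 𝟙 Y, naturality := by intros; simp }⟩
  obtain ⟨i₀⟩ : Nonempty I := IsFiltered.nonempty
  haveI : IsConnected I := IsFiltered.isConnected I
  have hconst : ∀ j : I, colimit.ι ((Functor.const I).obj Y) j
      = colimit.ι ((Functor.const I).obj Y) i₀ := by
    intro j
    refine constant_of_preserves_morphisms
      (α := (Y ⟶ colimit ((Functor.const I).obj Y)))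
      (fun j : I => colimit.ι ((Functor.const I).obj Y) j)
      (fun j₁ j₂ f => ?_) j i₀
    have := colimit.w ((Functor.const I).obj Y) f
    simpa using this.symm
  haveI : IsIso t := by
    refine ⟨colimit.ι ((Functor.const I).obj Y) i₀, ?_, by simp [t]⟩
    apply colimit.hom_ext
    intro j
    simp [t, hconst j]
  haveI : Mono t := inferInstance
  have hft : colimMap α ≫ t = adj.unit.app (colimit X) := by
    apply colimit.hom_ext
    intro j
    simp [t, α]
  rw [← hft]
  exact mono_comp _ _
end

section
/- Let d, n be natural numbers with n > d, let U be an open neighbourhood of 0 in ℝⁿ, and let σ : U → [0,∞) be given by σ(x) = x₁² + ⋯ + xₙ². There do not exist C²-maps g : U → ℝᵈ with g(0) = 0 and f : ℝᵈ → [0,∞) with f ∘ g = σ on U. More precisely: if f ∘ g = σ with f, g twice continuously differentiable and g(0)=0, then since n > d the differential dg|₀ has nontrivial kernel; choosing a unit vector v in the kernel and setting h(t) = g(tv), one has (f∘h)''(0) = 0, contradicting (f∘h)(t) = t², whose second derivative is 2. -/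
open scoped BigOperators

set_option maxHeartbeats 1000000 in
/-- Let `n > d`, let `U` be an open neighbourhood of `0` in `ℝⁿ`, and let
`σ : U → [0,∞)` be `σ x = x₁² + ⋯ + xₙ²`.  There are no `C²`-maps `g : U → ℝᵈ` with
`g 0 = 0` and `f : ℝᵈ → [0,∞)` with `f ∘ g = σ` on `U`. -/
theorem no_C2_factorization_of_sum_of_squares (d n : ℕ) (hdn : d < n)
    (U : Set (EuclideanSpace ℝ (Fin n))) (hU : IsOpen U) (h0U : 0 ∈ U)
    (g : EuclideanSpace ℝ (Fin n) → EuclideanSpace ℝ (Fin d))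
    (f : EuclideanSpace ℝ (Fin d) → ℝ)
    (hg : ContDiffOn ℝ 2 g U) (hf : ContDiff ℝ 2 f)
    (hg0 : g 0 = 0) (hfnonneg : ∀ y, 0 ≤ f y)
    (hfact : ∀ x ∈ U, f (g x) = ∑ i, (x i) ^ 2) : False := by
  -- f(0) = 0
  have hf0 : f 0 = 0 := by
    have := hfact 0 h0U
    simpa [hg0] using this
  -- f is differentiable everywhere
  have hfdiff : Differentiable ℝ f := hf.differentiable (by norm_num)
  -- fderiv f 0 = 0 (global minimum)
  have hmin : IsLocalMin f 0 := by
    apply Filter.Eventually.of_forall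
    intro y
    rw [hf0]; exact hfnonneg y
  have hDf0 : fderiv ℝ f 0 = 0 := hmin.fderiv_eq_zero
  -- fderiv f is Lipschitz near 0
  have hfd1 : ContDiff ℝ 1 (fderiv ℝ f) := hf.fderiv_right (by norm_num)
  obtain ⟨K, t, htmem, hK⟩ := hfd1.contDiffAt.exists_lipschitzOnWith (x := 0)
  have h0t : (0 : EuclideanSpace ℝ (Fin d)) ∈ t := mem_of_mem_nhds htmem
  obtain ⟨r, hrpos, hrt⟩ := Metric.mem_nhds_iff.mp htmem
  -- quadratic bound: for ‖y‖ < r, f y ≤ K * ‖y‖^2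
  have hquad : ∀ y : EuclideanSpace ℝ (Fin d), ‖y‖ < r → f y ≤ (K : ℝ) * ‖y‖ ^ 2 := by
    intro y hy
    have hseg : segment ℝ (0 : EuclideanSpace ℝ (Fin d)) y ⊆ Metric.closedBall 0 ‖y‖ := by
      apply (convex_closedBall (0 : EuclideanSpace ℝ (Fin d)) ‖y‖).segment_subset
      · simp
      · simp
    have hsegt : segment ℝ (0 : EuclideanSpace ℝ (Fin d)) y ⊆ t := by
      intro z hz
      apply hrt
      have := hseg hz
      simp only [Metric.mem_closedBall, dist_zero_right] at this
      exact Metric.mem_ball.mpr (by simpa [dist_zero_right] using lt_of_le_of_lt this hy)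
    have hbound : ∀ z ∈ segment ℝ (0 : EuclideanSpace ℝ (Fin d)) y,
        ‖fderiv ℝ f z‖ ≤ (K : ℝ) * ‖y‖ := by
      intro z hz
      have hd : dist (fderiv ℝ f z) (fderiv ℝ f 0) ≤ (K : ℝ) * dist z 0 :=
        hK.dist_le_mul z (hsegt hz) 0 h0t
      rw [hDf0, dist_zero_right, dist_zero_right] at hd
      have hz' : ‖z‖ ≤ ‖y‖ := by
        have := hseg hz
        simpa [dist_zero_right] using this
      calc ‖fderiv ℝ f z‖ ≤ (K : ℝ) * ‖z‖ := hd
        _ ≤ (K : ℝ) * ‖y‖ := by exact mul_le_mul_of_nonneg_left hz' K.coe_nonneg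
    have := (convex_segment (0 : EuclideanSpace ℝ (Fin d)) y).norm_image_sub_le_of_norm_fderiv_le
      (fun z _ => hfdiff z) hbound (left_mem_segment ℝ 0 y) (right_mem_segment ℝ 0 y)
    rw [hf0, sub_zero, sub_zero] at this
    calc f y ≤ |f y| := le_abs_self _
      _ = ‖f y‖ := rfl
      _ ≤ (K : ℝ) * ‖y‖ * ‖y‖ := this
      _ = (K : ℝ) * ‖y‖ ^ 2 := by ring
  -- g differentiable at 0
  have hgat : ContDiffAt ℝ 2 g 0 := hg.contDiffAt (hU.mem_nhds h0U)
  have hgd : DifferentiableAt ℝ g 0 := hgat.differentiableAt (by norm_num)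
  set D := fderiv ℝ g 0 with hD
  -- kernel of D is nontrivial
  have hker : ∃ v : EuclideanSpace ℝ (Fin n), v ≠ 0 ∧ D v = 0 := by
    by_contra h
    push_neg at h
    have hinj : Function.Injective (D : EuclideanSpace ℝ (Fin n) →ₗ[ℝ] EuclideanSpace ℝ (Fin d)) := by
      rw [← LinearMap.ker_eq_bot]
      rw [Submodule.eq_bot_iff]
      intro v hv
      by_contra hv0
      exact absurd hv (h v hv0)
    have := LinearMap.finrank_le_finrank_of_injective hinj
    rw [finrank_euclideanSpace_fin, finrank_euclideanSpace_fin] at this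
    omega
  obtain ⟨v, hv0, hDv⟩ := hker
  -- c = ∑ v i ^ 2 > 0
  set c := ∑ i, (v i) ^ 2 with hc
  have hcpos : 0 < c := by
    have : ∃ i, v i ≠ 0 := by
      by_contra h
      push_neg at h
      exact hv0 (PiLp.ext fun i => by simp [h i])
    obtain ⟨i0, hi0⟩ := this
    exact Finset.sum_pos' (fun i _ => sq_nonneg _)
      ⟨i0, Finset.mem_univ _, by positivity⟩
  -- h t = g (t • v) has derivative 0 at 0
  have hh : HasDerivAt (fun s : ℝ => g (s • v)) 0 0 := by
    have h1 : HasDerivAt (fun s : ℝ => s • v) v 0 := by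
      simpa using (hasDerivAt_id (0 : ℝ)).smul_const v
    have h2 : HasFDerivAt g D 0 := hgd.hasFDerivAt
    have h2' : HasFDerivAt g D ((0:ℝ) • v) := by simpa using h2
    have := h2'.comp_hasDerivAt 0 h1
    simpa [hDv, Function.comp_def] using this
  have hlittle : (fun s : ℝ => g (s • v)) =o[nhds 0] fun s : ℝ => s := by
    have := hasDerivAt_iff_isLittleO.mp hh
    simpa [hg0] using this
  -- choose ε with K * ε ^ 2 < c
  set ε := Real.sqrt (c / (2 * ((K : ℝ) + 1))) with hε
  have hεpos : 0 < ε := Real.sqrt_pos.mpr (by positivity)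
  have hεsq : ε ^ 2 = c / (2 * ((K : ℝ) + 1)) := Real.sq_sqrt (by positivity)
  have hKε : (K : ℝ) * ε ^ 2 < c := by
    have hX : (0:ℝ) < 2 * ((K : ℝ) + 1) := by positivity
    rw [hεsq, ← mul_div_assoc, div_lt_iff₀ hX]
    nlinarith [K.coe_nonneg, hcpos]
  -- eventual statements
  have e1 : ∀ᶠ s : ℝ in nhds 0, ‖g (s • v)‖ ≤ ε * ‖s‖ := hlittle.def hεpos
  have e2 : ∀ᶠ s : ℝ in nhds 0, s • v ∈ U := by
    have hcont : Continuous fun s : ℝ => s • v := continuous_id.smul continuous_const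
    have : (fun s : ℝ => s • v) ⁻¹' U ∈ nhds (0 : ℝ) := by
      apply hcont.continuousAt.preimage_mem_nhds
      simpa using hU.mem_nhds h0U
    exact this
  have e3 : ∀ᶠ s : ℝ in nhds 0, ε * ‖s‖ < r := by
    have : ContinuousAt (fun s : ℝ => ε * ‖s‖) 0 := by fun_prop
    have h2 : (fun s : ℝ => ε * ‖s‖) 0 < r := by simpa using hrpos
    exact this.eventually_lt continuousAt_const h2
  have hall : ∀ᶠ s : ℝ in nhdsWithin 0 {(0:ℝ)}ᶜ,
      (‖g (s • v)‖ ≤ ε * ‖s‖ ∧ (s • v ∈ U ∧ ε * ‖s‖ < r)) ∧ s ∈ ({(0:ℝ)}ᶜ : Set ℝ) :=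
    ((e1.and (e2.and e3)).filter_mono nhdsWithin_le_nhds).and self_mem_nhdsWithin
  obtain ⟨τ, ⟨h1, h2, h3⟩, hτ⟩ := hall.exists
  have hτ0 : τ ≠ 0 := hτ
  -- compute f (g (τ • v))
  have hval : f (g (τ • v)) = τ ^ 2 * c := by
    rw [hfact _ h2, hc, Finset.mul_sum]
    apply Finset.sum_congr rfl
    intro i _
    have : (τ • v) i = τ * v i := rfl
    rw [this]; ring
  have hnr : ‖g (τ • v)‖ < r := lt_of_le_of_lt h1 h3
  have hub := hquad _ hnr
  have hsq : ‖g (τ • v)‖ ^ 2 ≤ ε ^ 2 * τ ^ 2 := by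
    have := mul_self_le_mul_self (norm_nonneg _) h1
    calc ‖g (τ • v)‖ ^ 2 = ‖g (τ • v)‖ * ‖g (τ • v)‖ := sq _
      _ ≤ (ε * ‖τ‖) * (ε * ‖τ‖) := this
      _ = ε ^ 2 * τ ^ 2 := by rw [Real.norm_eq_abs]; nlinarith [sq_abs τ, abs_nonneg τ]
  have hτsq : 0 < τ ^ 2 := by positivity
  have : τ ^ 2 * c ≤ (K : ℝ) * (ε ^ 2 * τ ^ 2) := by
    calc τ ^ 2 * c = f (g (τ • v)) := hval.symm
      _ ≤ (K : ℝ) * ‖g (τ • v)‖ ^ 2 := hub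
      _ ≤ (K : ℝ) * (ε ^ 2 * τ ^ 2) := mul_le_mul_of_nonneg_left hsq K.coe_nonneg
  nlinarith [hKε, hτsq]
end

section
/- Let I be a set, and for each i ∈ I let A_i be a (small) filtered category and X_i : A_i → Set a functor. Then the canonical map colim over (α_i) ∈ ∏_{i∈I} A_i of ∏_{i∈I} X_i(α_i) → ∏_{i∈I} colim_{α_i ∈ A_i} X_i(α_i) is a bijection. -/
open CategoryTheory CategoryTheory.Limits

universe u

variable {I : Type u} {A : I → Type u} [∀ i, SmallCategory (A i)]

/-- The diagram `(αᵢ)ᵢ ↦ ∏ᵢ Xᵢ(αᵢ)` indexed by the product category `∏ᵢ Aᵢ`. -/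
def prodDiagram (X : ∀ i, A i ⥤ Type u) : (∀ i, A i) ⥤ Type u where
  obj α := ∀ i, (X i).obj (α i)
  map φ := TypeCat.ofHom fun x i => (X i).map (φ i) (x i)
  map_id := by
    intro α
    ext x
    simp [CategoryTheory.Pi.id_apply]
  map_comp := by
    intro α β γ φ ψ
    ext x
    simp [CategoryTheory.Pi.comp_apply]

/-- The canonical cocone on `prodDiagram X` with apex `∏ᵢ colim Xᵢ`. -/
noncomputable def canonicalCocone (X : ∀ i, A i ⥤ Type u) : Cocone (prodDiagram X) where
  pt := ∀ i, colimit (X i)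
  ι :=
    { app := fun α => TypeCat.ofHom fun x i => colimit.ι (X i) (α i) (x i)
      naturality := by
        intro α β φ
        ext x
        funext i
        exact congrArg (fun f => f (x i)) (colimit.w (X i) (φ i)) }

/-- The canonical comparison map
`colim_{(αᵢ) ∈ ∏ᵢ Aᵢ} ∏ᵢ Xᵢ(αᵢ) ⟶ ∏ᵢ colim_{αᵢ ∈ Aᵢ} Xᵢ(αᵢ)`. -/
noncomputable def canonicalMap (X : ∀ i, A i ⥤ Type u) :
    colimit (prodDiagram X) → ∀ i, colimit (X i) :=
  colimit.desc (prodDiagram X) (canonicalCocone X)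

theorem canonicalMap_apply_ι (X : ∀ i, A i ⥤ Type u) (α : ∀ i, A i)
    (x : ∀ i, (X i).obj (α i)) :
    canonicalMap X (colimit.ι (prodDiagram X) α x) = fun i => colimit.ι (X i) (α i) (x i) :=
  congrArg (fun f => f x) (colimit.ι_desc (canonicalCocone X) α)

/-- Products commute with filtered colimits in `Set`: for a family of filtered categories
`Aᵢ` and functors `Xᵢ : Aᵢ ⥤ Type`, the canonical map
`colim_{(αᵢ) ∈ ∏ᵢ Aᵢ} ∏ᵢ Xᵢ(αᵢ) → ∏ᵢ colim_{αᵢ} Xᵢ(αᵢ)` is a bijection. -/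
theorem canonicalMap_bijective [∀ i, IsFiltered (A i)] (X : ∀ i, A i ⥤ Type u) :
    Function.Bijective (canonicalMap X) := by
  constructor
  · intro u v h
    obtain ⟨α, x, rfl⟩ := Types.jointly_surjective' u
    obtain ⟨β, y, rfl⟩ := Types.jointly_surjective' v
    erw [canonicalMap_apply_ι X α x, canonicalMap_apply_ι X β y] at h
    have h' : ∀ i, ∃ (k : A i) (f : α i ⟶ k) (g : β i ⟶ k),
        (X i).map f (x i) = (X i).map g (y i) := by
      intro i
      exact (Types.FilteredColimit.colimit_eq_iff (X i)).mp (congrFun h i)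
    choose k f g hk using h'
    have h1 : colimit.ι (prodDiagram X) α x =
        colimit.ι (prodDiagram X) k ((prodDiagram X).map f x) :=
      (congrArg (fun h => h x) (colimit.w (prodDiagram X) (f : α ⟶ k))).symm
    have h2 : colimit.ι (prodDiagram X) β y =
        colimit.ι (prodDiagram X) k ((prodDiagram X).map g y) :=
      (congrArg (fun h => h y) (colimit.w (prodDiagram X) (g : β ⟶ k))).symm
    rw [h1, h2]
    have : (prodDiagram X).map f x = (prodDiagram X).map g y := funext hk
    rw [this]
  · intro z
    have h : ∀ i, ∃ (a : A i) (y : (X i).obj a), colimit.ι (X i) a y = z i := by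
      intro i
      obtain ⟨a, y, hy⟩ := Types.jointly_surjective' (z i)
      exact ⟨a, y, hy⟩
    choose a y hy using h
    exact ⟨colimit.ι (prodDiagram X) a y, by rw [canonicalMap_apply_ι]; funext i; exact hy i⟩
end

section
/- Let G be a group object in a category C with finite products, acting on an object P over B (i.e. an action a : P × G → P over B for a morphism p : P → B). Suppose the shearing map (pr₁, a) : P × G → P ×_B P is an isomorphism and p is an effective epimorphism. Then the Čech nerve of p is isomorphic, as a simplicial object, to the bar construction: P ×_B P ×_B ⋯ ×_B P (n+1 factors) ≅ P × G^n, compatibly with all face and degeneracy maps. -/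
universe u

variable {P B G : Type u} [Group G]

/-- The product `g₀ * g₁ * ⋯ * g_{k-1}` of the first `k` entries of `g : Fin n → G`. -/
def prodUpTo {n : ℕ} (g : Fin n → G) (k : ℕ) : G :=
  ((List.ofFn g).take k).prod

/-- The comparison map from the `n`-th level `P × Gⁿ` of the bar construction of a right
action `ρ` to sequences of `n + 1` points of `P`:
`(x; g₁, …, gₙ) ↦ (x, x·g₁, x·g₁g₂, …, x·g₁⋯gₙ)`. -/
def cechBarMap (ρ : P → G → P) {n : ℕ} (xg : P × (Fin n → G)) : Fin (n + 1) → P :=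
  fun i => ρ xg.1 (prodUpTo xg.2 i.val)

/-- The simplicial structure map of the bar construction of a right action `ρ`, for a
monotone map `φ : [m] → [n]`: it acts on `P × Gⁿ` by
`(x; g₁, …, gₙ) ↦ (x·(g₁⋯g_{φ 0}); h₁, …, h_m)` where `h_j = g_{φ(j-1)+1} ⋯ g_{φ j}`. -/
def barMap (ρ : P → G → P) {m n : ℕ} (φ : Fin (m + 1) →o Fin (n + 1)) :
    P × (Fin n → G) → P × (Fin m → G) :=
  fun xg =>
    (ρ xg.1 (prodUpTo xg.2 (φ 0).val),
      fun j => (prodUpTo xg.2 (φ j.castSucc).val)⁻¹ * prodUpTo xg.2 (φ j.succ).val)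

section aux
variable {G : Type u} [Group G]

theorem prodUpTo_zero {n : ℕ} (g : Fin n → G) : prodUpTo g 0 = 1 := by
  simp [prodUpTo]

theorem prodUpTo_succ {n : ℕ} (g : Fin n → G) (k : ℕ) (hk : k < n) :
    prodUpTo g (k + 1) = prodUpTo g k * g ⟨k, hk⟩ := by
  have hk' : k < (List.ofFn g).length := by simpa using hk
  simp [prodUpTo, List.prod_take_succ _ _ hk']

end aux

/-- Let `G` be a group acting on the right (via `ρ`) on `P` over `p : P → B`.  If the
shearing map `P × G → P ×_B P` is an isomorphism (equivalently, the action is free and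
transitive on each fiber) and `p` is an effective epimorphism (surjective), then the Čech
nerve of `p` is isomorphic, as a simplicial object, to the bar construction: in each
degree `n` the map `P × Gⁿ → P ×_B ⋯ ×_B P` is a bijection onto the `(n+1)`-fold fiber
product, compatibly with all the simplicial structure maps (in particular with all face
and degeneracy maps). -/
theorem cechNerve_iso_bar_construction (p : P → B) (ρ : P → G → P)
    (hρ_one : ∀ x, ρ x 1 = x)
    (hρ_mul : ∀ x g h, ρ x (g * h) = ρ (ρ x g) h)
    (hover : ∀ x g, p (ρ x g) = p x)
    (hshear : ∀ x y : P, p x = p y → ∃! g : G, ρ x g = y)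
    (hsurj : Function.Surjective p) :
    -- each level of the bar construction maps into the Čech nerve of `p` …
    (∀ (n : ℕ) (xg : P × (Fin n → G)) (i j : Fin (n + 1)),
      p (cechBarMap ρ xg i) = p (cechBarMap ρ xg j)) ∧
    -- … bijectively …
    (∀ n : ℕ, Function.Injective (cechBarMap ρ (n := n))) ∧
    (∀ (n : ℕ) (v : Fin (n + 1) → P), (∀ i j, p (v i) = p (v j)) →
      ∃ xg : P × (Fin n → G), cechBarMap ρ xg = v) ∧
    -- … and compatibly with all simplicial structure maps (faces and degeneracies):
    (∀ (m n : ℕ) (φ : Fin (m + 1) →o Fin (n + 1)) (xg : P × (Fin n → G)) (j : Fin (m + 1)),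
      cechBarMap ρ (barMap ρ φ xg) j = cechBarMap ρ xg (φ j)) := by

  have free : ∀ (x : P) (a b : G), ρ x a = ρ x b → a = b := by
    intro x a b hab
    have hp : p x = p (ρ x b) := (hover x b).symm
    obtain ⟨c, -, hu⟩ := hshear x (ρ x b) hp
    exact (hu a hab).trans (hu b rfl).symm
  refine ⟨?_, ?_, ?_, ?_⟩
  · intro n xg i j
    simp [cechBarMap, hover]
  · intro n ⟨x, g⟩ ⟨y, h⟩ heq
    have h0 : x = y := by
      have := congrFun heq (0 : Fin (n + 1))
      simpa [cechBarMap, prodUpTo_zero, hρ_one] using this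
    subst h0
    have key : ∀ k : ℕ, k ≤ n → prodUpTo g k = prodUpTo h k := by
      intro k hk
      have := congrFun heq ⟨k, Nat.lt_succ_of_le hk⟩
      exact free x _ _ this
    have : g = h := by
      funext k
      have h1 := key k (le_of_lt k.isLt)
      have h2 := key (k + 1) k.isLt
      rw [prodUpTo_succ g k.val k.isLt, prodUpTo_succ h k.val k.isLt, h1] at h2
      simpa using mul_left_cancel h2
    rw [this]
  · intro n v hv
    choose g hg _ using fun k : Fin n => hshear (v k.castSucc) (v k.succ) (hv _ _)
    refine ⟨(v 0, g), ?_⟩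
    funext i
    show ρ (v 0) (prodUpTo g i.val) = v i
    obtain ⟨i, hi⟩ := i
    induction i with
    | zero => simp [prodUpTo_zero, hρ_one]
    | succ k ih =>
      have hk : k < n := Nat.lt_of_succ_lt_succ hi
      rw [prodUpTo_succ g k hk, hρ_mul, ih (Nat.lt_of_succ_lt hi)]
      exact hg ⟨k, hk⟩
  · intro m n φ ⟨x, g⟩ j
    simp only [cechBarMap, barMap]
    have key : ∀ k : ℕ, (hk : k ≤ m) →
        prodUpTo (fun j : Fin m =>
            (prodUpTo g (φ j.castSucc).val)⁻¹ * prodUpTo g (φ j.succ).val) k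
          = (prodUpTo g (φ 0).val)⁻¹ * prodUpTo g (φ ⟨k, Nat.lt_succ_of_le hk⟩).val := by
      intro k hk
      induction k with
      | zero => simp [prodUpTo_zero]
      | succ l ih =>
        have hl : l < m := Nat.lt_of_succ_le hk
        rw [prodUpTo_succ _ l hl, ih (le_of_lt hl)]
        have h1 : (⟨l, hl⟩ : Fin m).castSucc = ⟨l, Nat.lt_succ_of_le (le_of_lt hl)⟩ := rfl
        have h2 : (⟨l, hl⟩ : Fin m).succ = ⟨l + 1, Nat.lt_succ_of_le hk⟩ := rfl
        rw [h1, h2]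
        group
    rw [← hρ_mul, key j.val (Nat.le_of_lt_succ j.isLt)]
    have : (⟨j.val, Nat.lt_succ_of_le (Nat.le_of_lt_succ j.isLt)⟩ : Fin (m+1)) = j := rfl
    rw [this]
    congr 1
    group
end
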